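/- The reversal invariance of the numerator fraction: for a finite sequence of positive integers (a₁, …, aₙ) with continued fraction value p/q in lowest terms, the reversed sequence (aₙ, …, a₁) has continued fraction value p/q′ where q·q′ ≡ (-1)^(n+1) mod p; in particular the two values have the same numerator p. -/
import Mathlib

/-- Continued fraction value of a finite sequence of rationals:
`cf [a] = a` and `cf (a :: rest) = a + 1/cf rest`. -/
def cf : List ℚ → ℚ
  | [] => 0
  | [a] => a
  | a :: b :: rest => a + 1 / cf (b :: rest)

namespace CFAux
open Matrix

def M (l : List ℤ) : Matrix (Fin 2) (Fin 2) ℤ :=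
  (l.map fun a => !![a, 1; 1, 0]).prod

@[simp] lemma M_nil : M [] = 1 := rfl

lemma M_cons (a : ℤ) (t : List ℤ) : M (a :: t) = !![a, 1; 1, 0] * M t := by
  simp [M]

lemma M_det (l : List ℤ) : (M l).det = (-1) ^ l.length := by
  induction l with
  | nil => simp
  | cons a t ih =>
    rw [M_cons, Matrix.det_mul, ih]
    simp [Matrix.det_fin_two_of, pow_succ]

lemma M_append (l₁ l₂ : List ℤ) : M (l₁ ++ l₂) = M l₁ * M l₂ := by
  simp [M, List.map_append, List.prod_append]

lemma M_reverse (l : List ℤ) : M l.reverse = (M l)ᵀ := by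
  induction l with
  | nil => simp
  | cons a t ih =>
    have hsym : (!![a, 1; 1, 0] : Matrix (Fin 2) (Fin 2) ℤ)ᵀ = !![a, 1; 1, 0] := by
      ext i j; fin_cases i <;> fin_cases j <;> simp
    have hMa : M [a] = !![a, 1; 1, 0] := by simp [M]
    rw [List.reverse_cons, M_append, ih, hMa, M_cons, Matrix.transpose_mul, hsym]

lemma M_cons_apply (a : ℤ) (t : List ℤ) (j : Fin 2) :
    M (a :: t) 0 j = a * M t 0 j + M t 1 j ∧ M (a :: t) 1 j = M t 0 j := by
  rw [M_cons]
  constructor <;> · rw [Matrix.mul_apply]; simp [Fin.sum_univ_two]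

lemma M_pos (l : List ℤ) (hl : l ≠ []) (hpos : ∀ a ∈ l, 0 < a) :
    1 ≤ M l 0 0 ∧ 1 ≤ M l 1 0 ∧ 1 ≤ M l 0 1 ∧ 0 ≤ M l 1 1 := by
  induction l with
  | nil => simp at hl
  | cons a t ih =>
    have ha : 1 ≤ a := hpos a (by simp)
    rcases eq_or_ne t [] with rfl | ht
    · refine ⟨?_, ?_, ?_, ?_⟩ <;> simp [M, ha]
    · obtain ⟨h00, h10, h01, h11⟩ := ih ht (fun b hb => hpos b (by simp [hb]))
      have e0 := M_cons_apply a t 0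
      have e1 := M_cons_apply a t 1
      refine ⟨?_, ?_, ?_, ?_⟩
      · rw [e0.1]; nlinarith
      · rw [e0.2]; exact h00
      · rw [e1.1]; nlinarith
      · rw [e1.2]; linarith

lemma cf_eq (l : List ℤ) (hl : l ≠ []) (hpos : ∀ a ∈ l, 0 < a) :
    cf (l.map (fun a => (a : ℚ))) = (M l 0 0 : ℚ) / (M l 1 0 : ℚ) := by
  induction l with
  | nil => simp at hl
  | cons a t ih =>
    rcases eq_or_ne t [] with rfl | ht
    · show cf [(a : ℚ)] = _
      simp [cf, M]
    · obtain ⟨h00, h10, h01, h11⟩ := M_pos t ht (fun b hb => hpos b (by simp [hb]))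
      have ihe := ih ht (fun b hb => hpos b (by simp [hb]))
      obtain ⟨b, r, rfl⟩ : ∃ b r, t = b :: r := by
        cases t with
        | nil => exact absurd rfl ht
        | cons b r => exact ⟨b, r, rfl⟩
      have hcf : cf ((a : ℚ) :: (b : ℚ) :: r.map (fun a => (a : ℚ))) =
          (a : ℚ) + 1 / cf ((b : ℚ) :: r.map (fun a => (a : ℚ))) := rfl
      rw [show (a :: b :: r).map (fun a => (a : ℚ)) =
          ((a : ℚ) :: (b : ℚ) :: r.map (fun a => (a : ℚ))) from rfl]
      rw [show ((b :: r).map (fun a => (a : ℚ))) =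
          ((b : ℚ) :: r.map (fun a => (a : ℚ))) from rfl] at ihe
      have hM00 : (0 : ℚ) < (M (b :: r) 0 0 : ℚ) := by exact_mod_cast h00
      have hM10 : (0 : ℚ) < (M (b :: r) 1 0 : ℚ) := by exact_mod_cast h10
      have e0 := M_cons_apply a (b :: r) 0
      rw [hcf, ihe, e0.1, e0.2]
      have hM00' : (M (b :: r) 0 0 : ℚ) ≠ 0 := ne_of_gt hM00
      have hM10' : (M (b :: r) 1 0 : ℚ) ≠ 0 := ne_of_gt hM10
      push_cast
      rw [one_div_div]
      field_simp

lemma coprime_of_det {a b x y : ℤ} (n : ℕ) (h : a * x - b * y = (-1) ^ n) :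
    Nat.Coprime a.natAbs b.natAbs := by
  have h2 : ((-1 : ℤ) ^ n) * ((-1 : ℤ) ^ n) = 1 := by
    rcases Nat.even_or_odd n with he | ho
    · rw [he.neg_one_pow]; ring
    · rw [ho.neg_one_pow]; ring
  have hco : IsCoprime a b :=
    ⟨x * (-1) ^ n, -y * (-1) ^ n, by linear_combination ((-1 : ℤ) ^ n) * h + h2⟩
  have := Int.isCoprime_iff_gcd_eq_one.mp hco
  simpa [Int.gcd, Nat.Coprime] using this

end CFAux

open CFAux Matrix in
/-- Reversal invariance of the numerator: if a nonempty list of positive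
integers has continued fraction value `p/q` in lowest terms, then the reversed
list has value `p/q′` with the same numerator `p`, and
`q·q′ ≡ (-1)^(n+1) (mod p)`. -/
theorem cf_reverse_numerator (l : List ℤ) (hl : l ≠ [])
    (hpos : ∀ a ∈ l, 0 < a) :
    (cf (l.map (fun a => (a : ℚ)))).num = (cf (l.reverse.map (fun a => (a : ℚ)))).num ∧
    Int.ModEq (cf (l.map (fun a => (a : ℚ)))).num
      (((cf (l.map (fun a => (a : ℚ)))).den : ℤ) *
        ((cf (l.reverse.map (fun a => (a : ℚ)))).den : ℤ))
      ((-1 : ℤ) ^ (l.length + 1)) := by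
  obtain ⟨h00, h10, h01, h11⟩ := M_pos l hl hpos
  have hdet : M l 0 0 * M l 1 1 - M l 0 1 * M l 1 0 = (-1) ^ l.length := by
    have := M_det l
    rwa [Matrix.det_fin_two] at this
  -- value of cf l
  have hcf : cf (l.map (fun a => (a : ℚ))) = (M l 0 0 : ℚ) / (M l 1 0 : ℚ) :=
    cf_eq l hl hpos
  have hcop1 : Nat.Coprime (M l 0 0).natAbs (M l 1 0).natAbs :=
    coprime_of_det (x := M l 1 1) (y := M l 0 1) l.length (by linear_combination hdet)
  have hb1 : (0 : ℤ) < M l 1 0 := by linarith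
  have hnum : (cf (l.map (fun a => (a : ℚ)))).num = M l 0 0 := by
    rw [hcf]; exact Rat.num_div_eq_of_coprime hb1 hcop1
  have hden : ((cf (l.map (fun a => (a : ℚ)))).den : ℤ) = M l 1 0 := by
    rw [hcf]; exact Rat.den_div_eq_of_coprime hb1 hcop1
  -- value of cf (reverse l)
  have hlr : l.reverse ≠ [] := by simpa using hl
  have hposr : ∀ a ∈ l.reverse, 0 < a := fun a ha => hpos a (List.mem_reverse.mp ha)
  have hMr : M l.reverse = (M l)ᵀ := M_reverse l
  have hcfr : cf (l.reverse.map (fun a => (a : ℚ)))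
      = (M l 0 0 : ℚ) / (M l 0 1 : ℚ) := by
    have := cf_eq l.reverse hlr hposr
    rwa [hMr, Matrix.transpose_apply, Matrix.transpose_apply] at this
  have hcop2 : Nat.Coprime (M l 0 0).natAbs (M l 0 1).natAbs :=
    coprime_of_det (x := M l 1 1) (y := M l 1 0) l.length (by linear_combination hdet)
  have hb2 : (0 : ℤ) < M l 0 1 := by linarith
  have hnumr : (cf (l.reverse.map (fun a => (a : ℚ)))).num = M l 0 0 := by
    rw [hcfr]; exact Rat.num_div_eq_of_coprime hb2 hcop2
  have hdenr : ((cf (l.reverse.map (fun a => (a : ℚ)))).den : ℤ) = M l 0 1 := by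
    rw [hcfr]; exact Rat.den_div_eq_of_coprime hb2 hcop2
  refine ⟨by rw [hnum, hnumr], ?_⟩
  rw [hnum, hden, hdenr]
  have hdvd : M l 0 0 ∣ (-1 : ℤ) ^ (l.length + 1) - M l 1 0 * M l 0 1 := by
    refine ⟨-(M l 1 1), ?_⟩
    rw [pow_succ]
    linarith [hdet]
  exact (Int.modEq_iff_dvd.mpr hdvd)
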